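/- arXiv:2309.07492 — 3 statements merged into one kernel-verified Lean document; each statement's English description precedes it below -/
import Mathlib

section
/- Every generalized eigenvalue λ of the pair (A_h, M), i.e. every λ for which there exists ψ ≠ 0 with A_h ψ = λ M ψ, is real and satisfies 0 < λ h² < 12. -/
open Matrix Finset

/-- The `(N+1) × (N+1)` stiffness matrix `A_h`: tridiagonal with diagonal entries `2/h²`
(except the last one, which is `1/h²`) and off-diagonal entries `−1/h²`. -/
noncomputable def stiffAh (N : ℕ) (h : ℝ) : Matrix (Fin (N + 1)) (Fin (N + 1)) ℝ :=
  Matrix.of fun i j =>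
    if i = j then (if (i : ℕ) = N then 1 / h ^ 2 else 2 / h ^ 2)
    else if (i : ℕ) + 1 = (j : ℕ) ∨ (j : ℕ) + 1 = (i : ℕ) then -(1 / h ^ 2) else 0

/-- The `(N+1) × (N+1)` FEM mass matrix `M`: tridiagonal with diagonal entries `4/6`
(except the last one, which is `2/6`) and off-diagonal entries `1/6`. -/
noncomputable def massM (N : ℕ) : Matrix (Fin (N + 1)) (Fin (N + 1)) ℝ :=
  Matrix.of fun i j =>
    if i = j then (if (i : ℕ) = N then 2 / 6 else 4 / 6)
    else if (i : ℕ) + 1 = (j : ℕ) ∨ (j : ℕ) + 1 = (i : ℕ) then 1 / 6 else 0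

lemma sum_upper {N : ℕ} (g : Fin (N+1) → Fin (N+1) → ℂ) :
    (∑ i : Fin (N+1), ∑ j : Fin (N+1), (if (i:ℕ)+1 = (j:ℕ) then g i j else 0))
    = ∑ k : Fin N, g k.castSucc k.succ := by
  rw [Fin.sum_univ_castSucc]
  have hlast : (∑ j : Fin (N+1), (if ((Fin.last N : Fin (N+1)):ℕ)+1 = (j:ℕ)
      then g (Fin.last N) j else 0)) = 0 := by
    apply Finset.sum_eq_zero
    intro j _
    rw [if_neg]
    have := j.isLt
    simp only [Fin.val_last]
    omega
  rw [hlast, add_zero]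
  apply Finset.sum_congr rfl
  intro k _
  have hc : ∀ j : Fin (N+1), (((k.castSucc : Fin (N+1)):ℕ)+1 = (j:ℕ)) ↔ (k.succ = j) := by
    intro j
    simp [Fin.ext_iff]
  calc (∑ j : Fin (N+1), (if ((k.castSucc : Fin (N+1)):ℕ)+1 = (j:ℕ)
          then g k.castSucc j else 0))
      = ∑ j : Fin (N+1), (if k.succ = j then g k.castSucc j else 0) := by
        apply Finset.sum_congr rfl; intro j _; exact if_congr (hc j) rfl rfl
    _ = g k.castSucc k.succ := by rw [Finset.sum_ite_eq]; simp

lemma sum_lower {N : ℕ} (g : Fin (N+1) → Fin (N+1) → ℂ) :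
    (∑ i : Fin (N+1), ∑ j : Fin (N+1), (if (j:ℕ)+1 = (i:ℕ) then g i j else 0))
    = ∑ k : Fin N, g k.succ k.castSucc := by
  rw [Finset.sum_comm]
  exact sum_upper (fun j i => g i j)

lemma quad (N : ℕ) (a b e : ℂ) (ψ : Fin (N+1) → ℂ) :
    star ψ ⬝ᵥ ((Matrix.of fun i j =>
        if i = j then (if (i:ℕ) = N then b else a)
        else if (i:ℕ)+1 = (j:ℕ) ∨ (j:ℕ)+1 = (i:ℕ) then e else 0) *ᵥ ψ)
    = (∑ k : Fin N, star (ψ k.castSucc) * a * ψ k.castSucc)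
      + star (ψ (Fin.last N)) * b * ψ (Fin.last N)
      + (∑ k : Fin N, star (ψ k.castSucc) * e * ψ k.succ)
      + (∑ k : Fin N, star (ψ k.succ) * e * ψ k.castSucc) := by
  have hpt : ∀ i j : Fin (N+1), star (ψ i) *
      ((Matrix.of fun i j : Fin (N+1) =>
        if i = j then (if (i:ℕ) = N then b else a)
        else if (i:ℕ)+1 = (j:ℕ) ∨ (j:ℕ)+1 = (i:ℕ) then e else 0) i j * ψ j)
      = (if i = j then star (ψ i) * (if (i:ℕ) = N then b else a) * ψ j else 0)
        + ((if (i:ℕ)+1 = (j:ℕ) then star (ψ i) * e * ψ j else 0)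
          + (if (j:ℕ)+1 = (i:ℕ) then star (ψ i) * e * ψ j else 0)) := by
    intro i j
    simp only [Matrix.of_apply]
    rcases eq_or_ne i j with rfl | hne
    · rw [if_pos rfl, if_pos rfl,
          if_neg (show ¬((i:ℕ)+1 = (i:ℕ)) by omega)]
      ring
    · rw [if_neg hne, if_neg hne]
      have hv : (i:ℕ) ≠ (j:ℕ) := fun hc => hne (Fin.ext hc)
      by_cases h1 : (i:ℕ)+1 = (j:ℕ)
      · rw [if_pos (Or.inl h1), if_pos h1, if_neg (show ¬((j:ℕ)+1 = (i:ℕ)) by omega)]; ring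
      · by_cases h2 : (j:ℕ)+1 = (i:ℕ)
        · rw [if_pos (Or.inr h2), if_neg h1, if_pos h2]; ring
        · rw [if_neg (by tauto), if_neg h1, if_neg h2]; ring
  have expand : star ψ ⬝ᵥ ((Matrix.of fun i j : Fin (N+1) =>
        if i = j then (if (i:ℕ) = N then b else a)
        else if (i:ℕ)+1 = (j:ℕ) ∨ (j:ℕ)+1 = (i:ℕ) then e else 0) *ᵥ ψ)
      = ∑ i : Fin (N+1), ∑ j : Fin (N+1),
          ((if i = j then star (ψ i) * (if (i:ℕ) = N then b else a) * ψ j else 0)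
        + ((if (i:ℕ)+1 = (j:ℕ) then star (ψ i) * e * ψ j else 0)
          + (if (j:ℕ)+1 = (i:ℕ) then star (ψ i) * e * ψ j else 0))) := by
    simp only [dotProduct, mulVec, Pi.star_apply, Finset.mul_sum]
    exact Finset.sum_congr rfl fun i _ => Finset.sum_congr rfl fun j _ => hpt i j
  rw [expand]
  simp only [Finset.sum_add_distrib]
  rw [sum_upper (fun i j => star (ψ i) * e * ψ j),
      sum_lower (fun i j => star (ψ i) * e * ψ j)]
  have hdiag : (∑ i : Fin (N+1), ∑ j : Fin (N+1),
      (if i = j then star (ψ i) * (if (i:ℕ) = N then b else a) * ψ j else 0))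
      = (∑ k : Fin N, star (ψ k.castSucc) * a * ψ k.castSucc)
        + star (ψ (Fin.last N)) * b * ψ (Fin.last N) := by
    have hthis : ∀ i : Fin (N+1), (∑ j : Fin (N+1),
        (if i = j then star (ψ i) * (if (i:ℕ) = N then b else a) * ψ j else 0))
        = star (ψ i) * (if (i:ℕ) = N then b else a) * ψ i := by
      intro i
      rw [Finset.sum_ite_eq]
      simp
    rw [Finset.sum_congr rfl fun i _ => hthis i, Fin.sum_univ_castSucc]
    have h1 : ∀ k : Fin N, ((k.castSucc : Fin (N+1)) : ℕ) ≠ N := by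
      intro k; simp [Fin.coe_castSucc]; omega
    rw [Finset.sum_congr rfl fun k _ => by rw [if_neg (h1 k)]]
    simp [Fin.val_last]
  rw [hdiag]
  ring

lemma S_pos {N : ℕ} (ψ : Fin (N+1) → ℂ) (hψ : ψ ≠ 0) (e : ℝ) (he : e ≠ 0) :
    0 < Complex.normSq (ψ 0) +
      ∑ k : Fin N, Complex.normSq (ψ k.castSucc + (e:ℂ) * ψ k.succ) := by
  have hnn0 : 0 ≤ Complex.normSq (ψ 0) := Complex.normSq_nonneg _
  have hnns : ∀ k : Fin N, 0 ≤ Complex.normSq (ψ k.castSucc + (e:ℂ) * ψ k.succ) :=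
    fun k => Complex.normSq_nonneg _
  have hsumnn : 0 ≤ ∑ k : Fin N, Complex.normSq (ψ k.castSucc + (e:ℂ) * ψ k.succ) :=
    Finset.sum_nonneg fun k _ => hnns k
  rcases lt_or_ge 0 (Complex.normSq (ψ 0) + ∑ k : Fin N,
      Complex.normSq (ψ k.castSucc + (e:ℂ) * ψ k.succ)) with hpos | hle
  · exact hpos
  · exfalso
    have h0 : Complex.normSq (ψ 0) = 0 := le_antisymm (by linarith) hnn0
    have hsum0 : (∑ k : Fin N, Complex.normSq (ψ k.castSucc + (e:ℂ) * ψ k.succ)) = 0 :=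
      le_antisymm (by linarith) hsumnn
    have hterm : ∀ k : Fin N, Complex.normSq (ψ k.castSucc + (e:ℂ) * ψ k.succ) = 0 := by
      intro k
      have := (Finset.sum_eq_zero_iff_of_nonneg (fun k _ => hnns k)).mp hsum0
      exact this k (Finset.mem_univ k)
    have hψ0 : ψ 0 = 0 := Complex.normSq_eq_zero.mp h0
    have hstep : ∀ k : Fin N, ψ k.castSucc = 0 → ψ k.succ = 0 := by
      intro k hk
      have hz : ψ k.castSucc + (e:ℂ) * ψ k.succ = 0 := Complex.normSq_eq_zero.mp (hterm k)
      rw [hk, zero_add] at hz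
      have hce : (e:ℂ) ≠ 0 := by exact_mod_cast he
      exact (mul_eq_zero.mp hz).resolve_left hce
    have hall : ∀ i : Fin (N+1), ψ i = 0 := by
      intro i
      induction i using Fin.induction with
      | zero => exact hψ0
      | succ k ih => exact hstep k ih
    exact hψ (funext hall)

/-- Every generalized eigenvalue `λ` of the pair `(A_h, M)` (i.e. every `λ`
for which `A_h ψ = λ M ψ` has a nonzero solution `ψ`) is real and satisfies
`0 < λ h² < 12`, where `h = L/(N+1)`. -/
theorem stmt_3 (N : ℕ) (L h : ℝ) (hL : 0 < L) (hh : h = L / (N + 1)) (lam : ℂ)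
    (hev : ∃ ψ : Fin (N + 1) → ℂ, ψ ≠ 0 ∧
      ((stiffAh N h).map (fun x => (x : ℂ))) *ᵥ ψ =
        lam • (((massM N).map (fun x => (x : ℂ))) *ᵥ ψ)) :
    lam.im = 0 ∧ 0 < lam.re * h ^ 2 ∧ lam.re * h ^ 2 < 12 := by
  obtain ⟨ψ, hψ, heq⟩ := hev
  have hNpos : (0:ℝ) < (N:ℝ) + 1 := by positivity
  have hhpos : 0 < h := by rw [hh]; exact div_pos hL hNpos
  have hne : h ≠ 0 := ne_of_gt hhpos
  have hch : (h:ℂ) ≠ 0 := by exact_mod_cast hne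
  -- abbreviations
  set F : ℂ := star (ψ 0) * ψ 0 with hF
  set La : ℂ := star (ψ (Fin.last N)) * ψ (Fin.last N) with hLa
  set X1 : ℂ := ∑ k : Fin N, star (ψ k.castSucc) * ψ k.castSucc with hX1
  set X2 : ℂ := ∑ k : Fin N, star (ψ k.succ) * ψ k.succ with hX2
  set C1 : ℂ := ∑ k : Fin N, star (ψ k.castSucc) * ψ k.succ with hC1
  set C2 : ℂ := ∑ k : Fin N, star (ψ k.succ) * ψ k.castSucc with hC2
  have hcs : (∑ i : Fin (N+1), star (ψ i) * ψ i) = X1 + La := by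
    rw [hX1, hLa, Fin.sum_univ_castSucc]
  have hss : (∑ i : Fin (N+1), star (ψ i) * ψ i) = F + X2 := by
    rw [hF, hX2, Fin.sum_univ_succ]
  -- rewrite the matrices in canonical tridiagonal form
  have hAeq : (stiffAh N h).map (fun x => (x : ℂ)) = Matrix.of (fun i j : Fin (N+1) =>
      if i = j then (if (i:ℕ) = N then ((1/h^2 : ℝ):ℂ) else ((2/h^2 : ℝ):ℂ))
      else if (i:ℕ)+1 = (j:ℕ) ∨ (j:ℕ)+1 = (i:ℕ) then ((-(1/h^2) : ℝ):ℂ) else 0) := by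
    ext i j
    simp only [Matrix.map_apply, Matrix.of_apply, stiffAh, apply_ite (fun x : ℝ => (x:ℂ))]
    norm_num
  have hMeq : (massM N).map (fun x => (x : ℂ)) = Matrix.of (fun i j : Fin (N+1) =>
      if i = j then (if (i:ℕ) = N then ((2/6 : ℝ):ℂ) else ((4/6 : ℝ):ℂ))
      else if (i:ℕ)+1 = (j:ℕ) ∨ (j:ℕ)+1 = (i:ℕ) then ((1/6 : ℝ):ℂ) else 0) := by
    ext i j
    simp only [Matrix.map_apply, Matrix.of_apply, massM, apply_ite (fun x : ℝ => (x:ℂ))]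
    norm_num
  have hconv : ∀ (c : ℂ) (u v : Fin N → ℂ),
      (∑ k : Fin N, u k * c * v k) = c * ∑ k : Fin N, u k * v k := by
    intro c u v
    rw [Finset.mul_sum]
    exact Finset.sum_congr rfl fun k _ => by ring
  have hqA : star ψ ⬝ᵥ (((stiffAh N h).map (fun x => (x : ℂ))) *ᵥ ψ)
      = ((2/h^2 : ℝ):ℂ) * X1 + ((1/h^2 : ℝ):ℂ) * La
        + ((-(1/h^2) : ℝ):ℂ) * C1 + ((-(1/h^2) : ℝ):ℂ) * C2 := by
    rw [hAeq, quad, hconv, hconv, hconv]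
    rw [hX1, hLa, hC1, hC2]
    ring
  have hqM : star ψ ⬝ᵥ (((massM N).map (fun x => (x : ℂ))) *ᵥ ψ)
      = ((4/6 : ℝ):ℂ) * X1 + ((2/6 : ℝ):ℂ) * La
        + ((1/6 : ℝ):ℂ) * C1 + ((1/6 : ℝ):ℂ) * C2 := by
    rw [hMeq, quad, hconv, hconv, hconv]
    rw [hX1, hLa, hC1, hC2]
    ring
  -- the real quadratic forms
  set SA : ℝ := Complex.normSq (ψ 0)
      + ∑ k : Fin N, Complex.normSq (ψ k.castSucc - ψ k.succ) with hSA
  set SB : ℝ := Complex.normSq (ψ 0)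
      + ∑ k : Fin N, Complex.normSq (ψ k.castSucc + ψ k.succ) with hSB
  have castSA : ((SA : ℝ) : ℂ) = F + (X1 + X2 - C1 - C2) := by
    rw [hSA]
    push_cast
    rw [hF, hX1, hX2, hC1, hC2]
    rw [Complex.normSq_eq_conj_mul_self]
    have hterm : ∀ k : Fin N, ((Complex.normSq (ψ k.castSucc - ψ k.succ) : ℝ) : ℂ)
        = star (ψ k.castSucc) * ψ k.castSucc + star (ψ k.succ) * ψ k.succ
          - star (ψ k.castSucc) * ψ k.succ - star (ψ k.succ) * ψ k.castSucc := by
      intro k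
      rw [Complex.normSq_eq_conj_mul_self, map_sub]
      simp only [Complex.star_def]
      ring
    rw [Finset.sum_congr rfl fun k _ => hterm k]
    simp only [Finset.sum_sub_distrib, Finset.sum_add_distrib, Complex.star_def]
  have castSB : ((SB : ℝ) : ℂ) = F + (X1 + X2 + C1 + C2) := by
    rw [hSB]
    push_cast
    rw [hF, hX1, hX2, hC1, hC2]
    rw [Complex.normSq_eq_conj_mul_self]
    have hterm : ∀ k : Fin N, ((Complex.normSq (ψ k.castSucc + ψ k.succ) : ℝ) : ℂ)
        = star (ψ k.castSucc) * ψ k.castSucc + star (ψ k.succ) * ψ k.succ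
          + star (ψ k.castSucc) * ψ k.succ + star (ψ k.succ) * ψ k.castSucc := by
      intro k
      rw [Complex.normSq_eq_conj_mul_self, map_add]
      simp only [Complex.star_def]
      ring
    rw [Finset.sum_congr rfl fun k _ => hterm k]
    simp only [Finset.sum_add_distrib, Complex.star_def]
  -- main identities
  have hA : (h:ℂ)^2 * (star ψ ⬝ᵥ (((stiffAh N h).map (fun x => (x : ℂ))) *ᵥ ψ)) = ((SA : ℝ) : ℂ) := by
    rw [hqA, castSA]
    push_cast
    field_simp
    linear_combination hss - hcs
  have hM : 12 * (star ψ ⬝ᵥ (((massM N).map (fun x => (x : ℂ))) *ᵥ ψ))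
      = ((SA : ℝ) : ℂ) + 3 * ((SB : ℝ) : ℂ) := by
    rw [hqM, castSA, castSB]
    push_cast
    linear_combination 4 * hss - 4 * hcs
  have hq : star ψ ⬝ᵥ (((stiffAh N h).map (fun x => (x : ℂ))) *ᵥ ψ)
      = lam * (star ψ ⬝ᵥ (((massM N).map (fun x => (x : ℂ))) *ᵥ ψ)) := by
    rw [heq]
    simp [dotProduct_smul, smul_eq_mul]
  -- positivity
  have hSApos : 0 < SA := by
    have := S_pos ψ hψ (-1) (by norm_num)
    rw [hSA]
    convert this using 2
    apply Finset.sum_congr rfl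
    intro k _
    push_cast
    ring_nf
  have hSBpos : 0 < SB := by
    have := S_pos ψ hψ 1 (by norm_num)
    rw [hSB]
    convert this using 2
    apply Finset.sum_congr rfl
    intro k _
    push_cast
    ring_nf
  -- key complex equation
  have key : lam * ((((SA + 3*SB) * h^2 : ℝ)) : ℂ) = ((12*SA : ℝ) : ℂ) := by
    push_cast
    push_cast at hA hM
    linear_combination 12 * hA - lam * (h:ℂ)^2 * hM - 12 * (h:ℂ)^2 * hq
  have hmpos : 0 < (SA + 3*SB) * h^2 :=
    mul_pos (by linarith) (pow_pos hhpos 2)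
  have him : lam.im * ((SA + 3*SB) * h^2) = 0 := by
    have h1 := congrArg Complex.im key
    simp only [Complex.mul_im, Complex.ofReal_im, Complex.ofReal_re, mul_zero,
      zero_add] at h1
    exact h1
  have hre : lam.re * ((SA + 3*SB) * h^2) = 12*SA := by
    have h1 := congrArg Complex.re key
    simp only [Complex.mul_re, Complex.ofReal_im, Complex.ofReal_re, mul_zero,
      sub_zero] at h1
    exact h1
  have himz : lam.im = 0 := by
    rcases mul_eq_zero.mp him with h' | h'
    · exact h'
    · exact absurd h' (ne_of_gt hmpos)
  refine ⟨himz, ?_, ?_⟩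
  · nlinarith [hre, hSApos, hSBpos, hmpos, sq_nonneg h]
  · nlinarith [hre, hSApos, hSBpos, hmpos, sq_nonneg h]
end

section
/- Let λ_max(N) denote the largest generalized eigenvalue of the pair (A_h, M) (equivalently, the largest eigenvalue of M⁻¹A_h), where h = L/(N+1). Then λ_max(N)·h² < 12 for every N, and λ_max(N)·h² → 12 as N → ∞. -/
open Matrix

open Finset Real Filter

lemma row_sum (N i : ℕ) (hi : i < N + 1) (D e : ℝ) (φ : ℕ → ℝ) :
    ∑ j ∈ Finset.range (N+1),
      (if i = j then D else if i+1 = j ∨ j+1 = i then e else 0) * φ j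
    = D * φ i + (if i < N then e * φ (i+1) else 0)
        + (if 1 ≤ i then e * φ (i-1) else 0) := by
  have key : ∀ j, (if i = j then D else if i+1 = j ∨ j+1 = i then e else 0) * φ j
      = (if j = i then D * φ i else 0) + (if j = i+1 then e * φ (i+1) else 0)
        + (if 1 ≤ i ∧ j = i - 1 then e * φ (i-1) else 0) := by
    intro j
    by_cases h1 : i = j
    · subst h1
      have h2 : ¬ (i = i + 1) := by omega
      have h3 : ¬ (1 ≤ i ∧ i = i - 1) := by omega
      simp [h2, h3]
    · by_cases h2 : i + 1 = j
      · have h3 : ¬ (j + 1 = i) := by omega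
        have h4 : ¬ (1 ≤ i ∧ j = i - 1) := by omega
        subst h2
        simp [h1, h3, h4]
      · by_cases h3 : j + 1 = i
        · have h4 : 1 ≤ i ∧ j = i - 1 := by omega
          have h5 : ¬ (j = i + 1) := by omega
          have h6 : j = i - 1 := by omega
          have h7 : ¬ (i = i - 1) := by omega
          have h8 : ¬ (i - 1 = i) := by omega
          simp [h1, h2, h3, h4, h5, Ne.symm h1, h6, h7, h8]
        · have h5 : ¬ (j = i + 1) := by omega
          have h6 : ¬ (1 ≤ i ∧ j = i - 1) := by omega
          simp [h1, h2, h3, h5, h6, Ne.symm h1]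
  rw [Finset.sum_congr rfl (fun j _ => key j), Finset.sum_add_distrib,
    Finset.sum_add_distrib, Finset.sum_ite_eq' (range (N+1)) i,
    Finset.sum_ite_eq' (range (N+1)) (i+1)]
  have hmem : i ∈ range (N+1) := mem_range.mpr hi
  have h2 : (i + 1 ∈ range (N+1)) ↔ i < N := by simp [mem_range]
  by_cases hι : 1 ≤ i
  · have h7 : ∀ j, (if 1 ≤ i ∧ j = i - 1 then e * φ (i-1) else 0)
        = (if j = i - 1 then e * φ (i-1) else 0) := by intro j; simp [hι]
    rw [Finset.sum_congr rfl (fun j _ => h7 j), Finset.sum_ite_eq' (range (N+1)) (i-1)]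
    have : i - 1 ∈ range (N+1) := mem_range.mpr (by omega)
    simp [hmem, this, hι, h2]
  · simp [hmem, hι, h2]

lemma tri_mulVec (N : ℕ) (a b e : ℝ) (φ : ℕ → ℝ) (i : Fin (N+1)) :
    ((Matrix.of fun i j : Fin (N+1) =>
        if i = j then (if (i:ℕ) = N then a else b)
        else if (i:ℕ)+1 = (j:ℕ) ∨ (j:ℕ)+1 = (i:ℕ) then e else 0) *ᵥ
          (fun j : Fin (N+1) => φ (j:ℕ))) i
    = (if (i:ℕ) = N then a else b) * φ (i:ℕ)
      + (if (i:ℕ) < N then e * φ ((i:ℕ)+1) else 0)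
      + (if 1 ≤ (i:ℕ) then e * φ ((i:ℕ)-1) else 0) := by
  simp only [mulVec, dotProduct, of_apply]
  have step : ∀ j : Fin (N+1),
      (if i = j then (if (i:ℕ) = N then a else b)
        else if (i:ℕ)+1 = (j:ℕ) ∨ (j:ℕ)+1 = (i:ℕ) then e else 0) * φ (j:ℕ)
      = (fun jn : ℕ => (if (i:ℕ) = jn then (if (i:ℕ) = N then a else b)
          else if (i:ℕ)+1 = jn ∨ jn+1 = (i:ℕ) then e else 0) * φ jn) (j:ℕ) := by
    intro j
    simp only [Fin.ext_iff]
  rw [Finset.sum_congr rfl (fun j _ => step j)]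
  rw [Fin.sum_univ_eq_sum_range (fun jn : ℕ => (if (i:ℕ) = jn then (if (i:ℕ) = N then a else b)
          else if (i:ℕ)+1 = jn ∨ jn+1 = (i:ℕ) then e else 0) * φ jn) (N+1)]
  exact row_sum N i i.isLt _ e φ

noncomputable def thN (N : ℕ) : ℝ := ((2*N+1) * Real.pi) / (2*(N+1))

lemma thN_pos (N : ℕ) : 0 < thN N := by
  apply div_pos (by positivity) (by positivity)

lemma thN_lt_pi (N : ℕ) : thN N < Real.pi := by
  rw [thN, div_lt_iff₀ (by positivity)]
  nlinarith [Real.pi_pos]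

lemma cos_succ_thN (N : ℕ) : Real.cos ((N+1) * thN N) = 0 := by
  have : (N+1 : ℝ) * thN N = N * Real.pi + Real.pi / 2 := by
    rw [thN]; field_simp
  rw [this, Real.cos_add, Real.cos_pi_div_two, Real.sin_pi_div_two,
    Real.sin_nat_mul_pi]
  ring

lemma key1 (θ : ℝ) (k : ℕ) :
    Real.sin ((k+2) * θ) + Real.sin (k * θ) = 2 * Real.cos θ * Real.sin ((k+1) * θ) := by
  have h1 : ((k:ℝ)+2) * θ = (k+1) * θ + θ := by ring
  have h2 : (k:ℝ) * θ = (k+1) * θ - θ := by ring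
  rw [h1, h2, Real.sin_add, Real.sin_sub]; ring

noncomputable def muN (N : ℕ) : ℝ :=
  6 * (1 - Real.cos (thN N)) / (2 + Real.cos (thN N))

lemma eigen (N : ℕ) (h : ℝ) (hh : h ≠ 0) :
    stiffAh N h *ᵥ (fun j : Fin (N+1) => Real.sin (((j:ℕ)+1) * thN N))
    = (muN N / h^2) • (massM N *ᵥ (fun j : Fin (N+1) => Real.sin (((j:ℕ)+1) * thN N))) := by
  funext i
  have hA : (stiffAh N h *ᵥ (fun j : Fin (N+1) => Real.sin (((j:ℕ)+1) * thN N))) i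
      = (if (i:ℕ) = N then 1/h^2 else 2/h^2) * Real.sin (((i:ℕ)+1) * thN N)
        + (if (i:ℕ) < N then -(1/h^2) * Real.sin (((((i:ℕ)+1 : ℕ) : ℝ)+1) * thN N) else 0)
        + (if 1 ≤ (i:ℕ) then -(1/h^2) * Real.sin (((((i:ℕ)-1 : ℕ) : ℝ)+1) * thN N) else 0) :=
    tri_mulVec N (1/h^2) (2/h^2) (-(1/h^2)) (fun k => Real.sin ((k+1) * thN N)) i
  have hM : (massM N *ᵥ (fun j : Fin (N+1) => Real.sin (((j:ℕ)+1) * thN N))) i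
      = (if (i:ℕ) = N then 2/6 else 4/6) * Real.sin (((i:ℕ)+1) * thN N)
        + (if (i:ℕ) < N then (1/6) * Real.sin (((((i:ℕ)+1 : ℕ) : ℝ)+1) * thN N) else 0)
        + (if 1 ≤ (i:ℕ) then (1/6) * Real.sin (((((i:ℕ)-1 : ℕ) : ℝ)+1) * thN N) else 0) :=
    tri_mulVec N (2/6) (4/6) (1/6) (fun k => Real.sin ((k+1) * thN N)) i
  set θ := thN N with hθ
  set c := Real.cos θ with hc
  have h2c : (0:ℝ) < 2 + c := by nlinarith [Real.neg_one_le_cos θ]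
  have bl : ∀ x : ℝ, (if 1 ≤ (i:ℕ) then x * Real.sin (((((i:ℕ)-1 : ℕ) : ℝ)+1) * θ) else 0)
      = x * Real.sin ((i:ℕ) * θ) := by
    intro x
    by_cases h1 : 1 ≤ (i:ℕ)
    · have hcast : ((((i:ℕ)-1 : ℕ)) : ℝ) + 1 = ((i:ℕ) : ℝ) := by
        have h2 : (((i:ℕ) - 1 : ℕ) : ℝ) = ((i:ℕ) : ℝ) - 1 := by
          push_cast [Nat.cast_sub h1]; ring
        rw [h2]; ring
      rw [if_pos h1, hcast]
    · have h0 : (i:ℕ) = 0 := by omega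
      rw [if_neg h1, h0]
      norm_num
  rw [Pi.smul_apply, hA, hM, bl, bl]
  by_cases hiN : (i:ℕ) = N
  · -- last row
    have hnlt : ¬ ((i:ℕ) < N) := by omega
    have key2 : Real.sin ((N:ℝ) * θ) = c * Real.sin (((N:ℝ)+1) * θ) := by
      have e1 : (N:ℝ) * θ = ((N:ℝ)+1) * θ - θ := by ring
      rw [e1, Real.sin_sub, hθ, cos_succ_thN]; ring
    rw [if_pos hiN, if_pos hiN, if_neg hnlt, if_neg hnlt, hiN]
    push_cast
    rw [key2, muN, ← hθ, ← hc]
    have hh2 : h^2 ≠ 0 := pow_ne_zero 2 hh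
    have hd : 2 + c ≠ 0 := h2c.ne'
    have hu : (2 + c) * (2 + c)⁻¹ = 1 := mul_inv_cancel₀ hd
    linear_combination (-(1 - c) * Real.sin (((N:ℝ)+1) * θ) / h^2) * hu
  · -- interior row
    have hlt : (i:ℕ) < N := by omega
    have hk := key1 θ (i:ℕ)
    rw [if_neg hiN, if_neg hiN, if_pos hlt, if_pos hlt]
    push_cast
    push_cast at hk
    rw [muN, ← hθ, ← hc]
    have e2 : (((i:ℕ):ℝ) + 1 + 1) * θ = (((i:ℕ):ℝ) + 2) * θ := by ring
    rw [e2]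
    rw [← hc] at hk
    have hh2 : h^2 ≠ 0 := pow_ne_zero 2 hh
    have hd : 2 + c ≠ 0 := h2c.ne'
    have hu : (2 + c) * (2 + c)⁻¹ = 1 := mul_inv_cancel₀ hd
    linear_combination (-(1 + (1 - c) * (2 + c)⁻¹) / h^2) * hk
      + (-(1 - c) * 2 * Real.sin ((((i:ℕ):ℝ)+1) * θ) / h^2) * hu

section quad
variable (N : ℕ) (φ : ℕ → ℝ)

noncomputable def SAq : ℝ := ∑ i ∈ range (N+1),
  φ i * ((if i = N then (1:ℝ) else 2) * φ i + (if i < N then -φ (i+1) else 0)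
    + (if 1 ≤ i then -φ (i-1) else 0))

noncomputable def SMq : ℝ := ∑ i ∈ range (N+1),
  φ i * ((if i = N then (2:ℝ) else 4) * φ i + (if i < N then φ (i+1) else 0)
    + (if 1 ≤ i then φ (i-1) else 0))

lemma diag_sum (a b : ℝ) :
    ∑ i ∈ range (N+1), φ i * ((if i = N then a else b) * φ i)
    = b * (∑ i ∈ range N, φ i^2) + a * φ N^2 := by
  rw [Finset.sum_range_succ, if_pos rfl]
  have h : ∀ i ∈ range N, φ i * ((if i = N then a else b) * φ i) = b * φ i^2 := by
    intro i hi
    rw [if_neg (by have := mem_range.mp hi; omega)]; ring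
  rw [Finset.sum_congr rfl h, ← Finset.mul_sum]
  ring

lemma right_sum (c : ℝ) :
    ∑ i ∈ range (N+1), φ i * (if i < N then c * φ (i+1) else 0)
    = c * ∑ i ∈ range N, φ i * φ (i+1) := by
  rw [Finset.sum_range_succ, if_neg (lt_irrefl N)]
  have h : ∀ i ∈ range N, φ i * (if i < N then c * φ (i+1) else 0)
      = c * (φ i * φ (i+1)) := by
    intro i hi; rw [if_pos (mem_range.mp hi)]; ring
  rw [Finset.sum_congr rfl h, ← Finset.mul_sum]
  ring

lemma left_sum (c : ℝ) :
    ∑ i ∈ range (N+1), φ i * (if 1 ≤ i then c * φ (i-1) else 0)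
    = c * ∑ i ∈ range N, φ i * φ (i+1) := by
  rw [Finset.sum_range_succ']
  have h : ∀ i ∈ range N, φ (i+1) * (if 1 ≤ i+1 then c * φ (i+1-1) else 0)
      = c * (φ i * φ (i+1)) := by
    intro i hi; rw [if_pos (by omega)]
    simp only [Nat.add_sub_cancel]; ring
  rw [Finset.sum_congr rfl h, ← Finset.mul_sum]
  norm_num

lemma shift_sq : ∑ i ∈ range N, φ (i+1)^2
    = (∑ i ∈ range N, φ i^2) + φ N^2 - φ 0^2 := by
  have h1 := Finset.sum_range_succ (fun i => φ i^2) N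
  have h2 := Finset.sum_range_succ' (fun i => φ i^2) N
  linarith

lemma sq_expand (c : ℝ) : ∑ i ∈ range N, (φ i + c * φ (i+1))^2
    = (∑ i ∈ range N, φ i^2) + c^2 * (∑ i ∈ range N, φ (i+1)^2)
      + 2*c* ∑ i ∈ range N, φ i * φ (i+1) := by
  rw [Finset.mul_sum, Finset.mul_sum, ← Finset.sum_add_distrib, ← Finset.sum_add_distrib]
  exact Finset.sum_congr rfl (fun i _ => by ring)

lemma SAq_eq : SAq N φ = φ 0^2 + ∑ i ∈ range N, (φ i + (-1) * φ (i+1))^2 := by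
  rw [SAq]
  simp only [mul_add, Finset.sum_add_distrib]
  have e1 : ∀ i ∈ range (N+1), φ i * (if i < N then -φ (i+1) else 0)
      = φ i * (if i < N then (-1 : ℝ) * φ (i+1) else 0) := by
    intro i _; congr 1; split_ifs <;> ring
  have e2 : ∀ i ∈ range (N+1), φ i * (if 1 ≤ i then -φ (i-1) else 0)
      = φ i * (if 1 ≤ i then (-1 : ℝ) * φ (i-1) else 0) := by
    intro i _; congr 1; split_ifs <;> ring
  rw [Finset.sum_congr rfl e1, Finset.sum_congr rfl e2, diag_sum, right_sum, left_sum,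
    sq_expand, shift_sq]
  ring

lemma SMq_eq : 2 * SMq N φ = SAq N φ
    + (3 * φ 0^2 + 3 * ∑ i ∈ range N, (φ i + 1 * φ (i+1))^2) := by
  rw [SAq_eq, SMq]
  simp only [mul_add, Finset.sum_add_distrib]
  have e1 : ∀ i ∈ range (N+1), φ i * (if i < N then φ (i+1) else 0)
      = φ i * (if i < N then (1 : ℝ) * φ (i+1) else 0) := by
    intro i _; congr 1; split_ifs <;> ring
  have e2 : ∀ i ∈ range (N+1), φ i * (if 1 ≤ i then φ (i-1) else 0)
      = φ i * (if 1 ≤ i then (1 : ℝ) * φ (i-1) else 0) := by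
    intro i _; congr 1; split_ifs <;> ring
  rw [Finset.sum_congr rfl e1, Finset.sum_congr rfl e2, diag_sum, right_sum, left_sum,
    sq_expand, sq_expand, shift_sq]
  ring

end quad

lemma dot_A (N : ℕ) (h : ℝ) (hh : h ≠ 0) (φ : ℕ → ℝ) :
    ∑ i : Fin (N+1), φ (i:ℕ) * (stiffAh N h *ᵥ (fun j : Fin (N+1) => φ (j:ℕ))) i
    = (1/h^2) * SAq N φ := by
  have step : ∀ i : Fin (N+1),
      φ (i:ℕ) * (stiffAh N h *ᵥ (fun j : Fin (N+1) => φ (j:ℕ))) i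
      = (fun k : ℕ => (1/h^2) * (φ k * ((if k = N then (1:ℝ) else 2) * φ k
          + (if k < N then -φ (k+1) else 0) + (if 1 ≤ k then -φ (k-1) else 0)))) (i:ℕ) := by
    intro i
    have h0 : (stiffAh N h *ᵥ (fun j : Fin (N+1) => φ (j:ℕ))) i
        = (if (i:ℕ) = N then 1/h^2 else 2/h^2) * φ (i:ℕ)
          + (if (i:ℕ) < N then -(1/h^2) * φ ((i:ℕ)+1) else 0)
          + (if 1 ≤ (i:ℕ) then -(1/h^2) * φ ((i:ℕ)-1) else 0) :=
      tri_mulVec N (1/h^2) (2/h^2) (-(1/h^2)) φ i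
    rw [h0]
    simp only
    split_ifs <;> ring
  rw [Finset.sum_congr rfl (fun i _ => step i),
    Fin.sum_univ_eq_sum_range (fun k : ℕ => (1/h^2) * (φ k * ((if k = N then (1:ℝ) else 2) * φ k
          + (if k < N then -φ (k+1) else 0) + (if 1 ≤ k then -φ (k-1) else 0)))) (N+1),
    ← Finset.mul_sum, SAq]

lemma dot_M (N : ℕ) (φ : ℕ → ℝ) :
    ∑ i : Fin (N+1), φ (i:ℕ) * (massM N *ᵥ (fun j : Fin (N+1) => φ (j:ℕ))) i
    = (1/6) * SMq N φ := by
  have step : ∀ i : Fin (N+1),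
      φ (i:ℕ) * (massM N *ᵥ (fun j : Fin (N+1) => φ (j:ℕ))) i
      = (fun k : ℕ => (1/6 : ℝ) * (φ k * ((if k = N then (2:ℝ) else 4) * φ k
          + (if k < N then φ (k+1) else 0) + (if 1 ≤ k then φ (k-1) else 0)))) (i:ℕ) := by
    intro i
    have h0 : (massM N *ᵥ (fun j : Fin (N+1) => φ (j:ℕ))) i
        = (if (i:ℕ) = N then (2:ℝ)/6 else 4/6) * φ (i:ℕ)
          + (if (i:ℕ) < N then (1/6) * φ ((i:ℕ)+1) else 0)
          + (if 1 ≤ (i:ℕ) then (1/6) * φ ((i:ℕ)-1) else 0) :=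
      tri_mulVec N (2/6) (4/6) (1/6) φ i
    rw [h0]
    simp only
    split_ifs <;> ring
  rw [Finset.sum_congr rfl (fun i _ => step i),
    Fin.sum_univ_eq_sum_range (fun k : ℕ => (1/6 : ℝ) * (φ k * ((if k = N then (2:ℝ) else 4) * φ k
          + (if k < N then φ (k+1) else 0) + (if 1 ≤ k then φ (k-1) else 0)))) (N+1),
    ← Finset.mul_sum, SMq]

lemma upper (N : ℕ) (h : ℝ) (hh : 0 < h) (lam : ℝ) (ψ : Fin (N+1) → ℝ) (hψ : ψ ≠ 0)
    (heq : stiffAh N h *ᵥ ψ = lam • (massM N *ᵥ ψ)) : lam * h^2 < 12 := by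
  set φ : ℕ → ℝ := fun k => if hk : k < N+1 then ψ ⟨k, hk⟩ else 0 with hφ
  have hψφ : ψ = fun j : Fin (N+1) => φ (j:ℕ) := by
    funext j; simp [hφ, j.isLt]
    intro hj; have := j.isLt; omega
  rw [hψφ] at heq
  have hdot : (1/h^2) * SAq N φ = lam * ((1/6) * SMq N φ) := by
    rw [← dot_A N h hh.ne' φ, ← dot_M N φ, heq]
    rw [Finset.mul_sum]
    exact Finset.sum_congr rfl (fun i _ => by simp [Pi.smul_apply, smul_eq_mul]; ring)
  -- atoms
  set Z := φ 0^2 with hZ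
  set V := ∑ i ∈ range N, (φ i + (-1) * φ (i+1))^2 with hV
  set W := ∑ i ∈ range N, (φ i + 1 * φ (i+1))^2 with hW
  have hSA := SAq_eq N φ
  have hSM := SMq_eq N φ
  have hZ0 : 0 ≤ Z := sq_nonneg _
  have hV0 : 0 ≤ V := Finset.sum_nonneg (fun i _ => sq_nonneg _)
  have hW0 : 0 ≤ W := Finset.sum_nonneg (fun i _ => sq_nonneg _)
  -- positivity of P = 3Z + 3W
  have hP : 0 < 3 * Z + 3 * W := by
    rcases lt_or_eq_of_le (by linarith : (0:ℝ) ≤ 3 * Z + 3 * W) with hlt | heq0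
    · exact hlt
    exfalso
    have hZ00 : Z = 0 := by linarith
    have hW00 : W = 0 := by linarith
    have hφ0 : φ 0 = 0 := by
      have hsq : φ 0 ^ 2 = 0 := by rw [← hZ]; exact hZ00
      exact pow_eq_zero_iff two_ne_zero |>.mp hsq
    have hWall : ∀ i ∈ range N, φ i + 1 * φ (i+1) = 0 := by
      intro i hi
      have hsum : ∑ i ∈ range N, (φ i + 1 * φ (i+1))^2 = 0 := by rw [← hW]; exact hW00
      have h2 := (Finset.sum_eq_zero_iff_of_nonneg
        (fun j (_ : j ∈ range N) => sq_nonneg (φ j + 1 * φ (j+1)))).mp hsum i hi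
      exact pow_eq_zero_iff two_ne_zero |>.mp h2
    have hall : ∀ k, k ≤ N → φ k = 0 := by
      intro k
      induction k with
      | zero => exact fun _ => hφ0
      | succ n ih =>
        intro hk
        have h1 := hWall n (mem_range.mpr (by omega))
        have h2 := ih (by omega)
        linarith
    apply hψ
    rw [hψφ]
    funext j
    simpa using hall (j:ℕ) (by omega)
  have hSMpos : 0 < SMq N φ := by nlinarith
  have h6 : 6 * SAq N φ = lam * h^2 * SMq N φ := by
    field_simp at hdot
    linarith
  nlinarith [hP, hSMpos, h6, hSM, hSA]

lemma muN_tendsto : Tendsto muN atTop (nhds 12) := by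
  have hth : Tendsto thN atTop (nhds Real.pi) := by
    have heq : ∀ N : ℕ, thN N = Real.pi - Real.pi / (2*(N+1)) := by
      intro N
      rw [thN]
      have : ((N:ℝ)+1) ≠ 0 := by positivity
      field_simp
      ring
    have h0 : Tendsto (fun N : ℕ => Real.pi / (2*((N:ℝ)+1))) atTop (nhds 0) := by
      apply Tendsto.div_atTop tendsto_const_nhds
      have h1 : Tendsto (fun N : ℕ => (N:ℝ) + 1) atTop atTop :=
        tendsto_atTop_add_const_right _ _ (tendsto_natCast_atTop_atTop (R := ℝ))
      exact h1.const_mul_atTop (by norm_num)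
    have := (tendsto_const_nhds (x := Real.pi) (f := atTop (α := ℕ))).sub h0
    rw [sub_zero] at this
    exact Tendsto.congr (fun N => (heq N).symm) this
  have hcos : Tendsto (fun N => Real.cos (thN N)) atTop (nhds (-1)) := by
    have := (Real.continuous_cos.tendsto Real.pi).comp hth
    rwa [Real.cos_pi] at this
  have hnum : Tendsto (fun N => 6 * (1 - Real.cos (thN N))) atTop (nhds 12) := by
    have := (tendsto_const_nhds (x := (1:ℝ)) (f := atTop (α := ℕ))).sub hcos
    have h2 := this.const_mul 6
    norm_num at h2
    exact h2
  have hden : Tendsto (fun N => 2 + Real.cos (thN N)) atTop (nhds 1) := by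
    have := (tendsto_const_nhds (x := (2:ℝ)) (f := atTop (α := ℕ))).add hcos
    norm_num at this
    exact this
  have := hnum.div hden (by norm_num)
  norm_num at this
  exact this

/-- If `λ_max(N)` denotes the largest generalized eigenvalue of the pair
`(A_h, M)` with `h = L/(N+1)`, then `λ_max(N)·h² < 12` for every `N`, and
`λ_max(N)·h² → 12` as `N → ∞`. -/
theorem stmt_4 (L : ℝ) (hL : 0 < L) (lamMax : ℕ → ℝ)
    (hmax : ∀ N : ℕ, IsGreatest
      {lam : ℝ | ∃ ψ : Fin (N + 1) → ℝ, ψ ≠ 0 ∧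
        (stiffAh N (L / (N + 1))) *ᵥ ψ = lam • ((massM N) *ᵥ ψ)} (lamMax N)) :
    (∀ N : ℕ, lamMax N * (L / (N + 1)) ^ 2 < 12) ∧
    Filter.Tendsto (fun N : ℕ => lamMax N * (L / (N + 1)) ^ 2)
      Filter.atTop (nhds 12) := by
  have hh : ∀ N : ℕ, 0 < L / ((N:ℝ) + 1) := by
    intro N; positivity
  have part1 : ∀ N : ℕ, lamMax N * (L / (N + 1)) ^ 2 < 12 := by
    intro N
    obtain ⟨ψ, hψ, heq⟩ := (hmax N).1
    exact upper N _ (hh N) _ ψ hψ heq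
  refine ⟨part1, ?_⟩
  have hmem : ∀ N : ℕ, muN N / (L / ((N:ℝ)+1))^2 ∈
      {lam : ℝ | ∃ ψ : Fin (N + 1) → ℝ, ψ ≠ 0 ∧
        (stiffAh N (L / (N + 1))) *ᵥ ψ = lam • ((massM N) *ᵥ ψ)} := by
    intro N
    refine ⟨fun j : Fin (N+1) => Real.sin (((j:ℕ)+1) * thN N), ?_, ?_⟩
    · intro hcon
      have h0 : Real.sin (((0:ℕ)+1) * thN N) = 0 := by
        have := congrFun hcon (0 : Fin (N+1))
        simpa using this
      have : 0 < Real.sin (thN N) := Real.sin_pos_of_pos_of_lt_pi (thN_pos N) (thN_lt_pi N)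
      norm_num at h0
      linarith
    · exact eigen N _ (hh N).ne'
  have hlow : ∀ N : ℕ, muN N ≤ lamMax N * (L / ((N:ℝ)+1))^2 := by
    intro N
    have := (hmax N).2 (hmem N)
    calc muN N = muN N / (L / ((N:ℝ)+1))^2 * (L / ((N:ℝ)+1))^2 := by
          field_simp
      _ ≤ lamMax N * (L / ((N:ℝ)+1))^2 := by
          apply mul_le_mul_of_nonneg_right this (by positivity)
  exact tendsto_of_tendsto_of_tendsto_of_le_of_le muN_tendsto
    tendsto_const_nhds hlow (fun N => (part1 N).le)
end

section
/- For any grid functions U, V, W : {0, 1, …, N+1} → ℝ, the triple-product summation-by-parts identity h·Σ_{j=0}^{N} [δ_x U_{j+1/2} · V_{j+1/2} · W_{j+1/2} + U_{j+1/2} · δ_x V_{j+1/2} · W_{j+1/2} + U_{j+1/2} · V_{j+1/2} · δ_x W_{j+1/2}] + U₀V₀W₀ = U_{N+1}V_{N+1}W_{N+1} − (1/4)·Σ_{j=0}^{N} (U_{j+1} − U_j)(V_{j+1} − V_j)(W_{j+1} − W_j) holds. -/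
/-- Triple-product summation-by-parts identity for grid functions
`U, V, W` on `{0, …, N+1}`, with midpoint averages `U_{j+1/2} = (U_j + U_{j+1})/2` and
difference quotients `δ_x U_{j+1/2} = (U_{j+1} − U_j)/h`. -/
theorem stmt_7 (N : ℕ) (h : ℝ) (hh : 0 < h) (U V W : ℕ → ℝ) :
    h * ∑ j ∈ Finset.range (N + 1),
        (((U (j + 1) - U j) / h) * ((V j + V (j + 1)) / 2) * ((W j + W (j + 1)) / 2)
          + ((U j + U (j + 1)) / 2) * ((V (j + 1) - V j) / h) * ((W j + W (j + 1)) / 2)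
          + ((U j + U (j + 1)) / 2) * ((V j + V (j + 1)) / 2) * ((W (j + 1) - W j) / h))
      + U 0 * V 0 * W 0
      = U (N + 1) * V (N + 1) * W (N + 1)
        - 1 / 4 * ∑ j ∈ Finset.range (N + 1),
            (U (j + 1) - U j) * (V (j + 1) - V j) * (W (j + 1) - W j) := by
  have hne : h ≠ 0 := ne_of_gt hh
  rw [Finset.mul_sum]
  have key : ∀ j ∈ Finset.range (N + 1),
      h * (((U (j + 1) - U j) / h) * ((V j + V (j + 1)) / 2) * ((W j + W (j + 1)) / 2)
          + ((U j + U (j + 1)) / 2) * ((V (j + 1) - V j) / h) * ((W j + W (j + 1)) / 2)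
          + ((U j + U (j + 1)) / 2) * ((V j + V (j + 1)) / 2) * ((W (j + 1) - W j) / h))
      = (U (j + 1) * V (j + 1) * W (j + 1) - U j * V j * W j)
        - 1 / 4 * ((U (j + 1) - U j) * (V (j + 1) - V j) * (W (j + 1) - W j)) := by
    intro j _
    field_simp
    ring
  rw [Finset.sum_congr rfl key, Finset.sum_sub_distrib,
    Finset.sum_range_sub (fun j => U j * V j * W j), ← Finset.mul_sum]
  ring
end
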